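/- Let θ : Fin 2 × Fin 2 → ℂ be a unit vector. Suppose θ is perfectly correlated in the computational basis, i.e., θ(0,1) = 0 and θ(1,0) = 0, and perfectly correlated in the diagonal basis, i.e., ⟨(+) ⊗ (−), θ⟩ = 0 and ⟨(−) ⊗ (+), θ⟩ = 0, where (+) = (1/√2)(1,1), (−) = (1/√2)(1,−1), and ((±) ⊗ (∓))(a,b) = (±)(a)·(∓)(b). Then θ = c·Φ⁺ for some complex number c with |c| = 1 (i.e., θ equals the EPR vector up to a global phase). -/

import Mathlib

/-- The EPR vector `Φ⁺` on `Fin 2 × Fin 2`. -/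
noncomputable def EPR : Fin 2 × Fin 2 → ℂ :=
  fun p => if p.1 = p.2 then ((1 / Real.sqrt 2 : ℝ) : ℂ) else 0

/-- The `|+⟩` vector. -/
noncomputable def plusVec : Fin 2 → ℂ := fun _ => ((1 / Real.sqrt 2 : ℝ) : ℂ)

/-- The `|−⟩` vector. -/
noncomputable def minusVec : Fin 2 → ℂ :=
  fun a => if a = 0 then ((1 / Real.sqrt 2 : ℝ) : ℂ) else -((1 / Real.sqrt 2 : ℝ) : ℂ)

/-- a two-qubit unit vector perfectly correlated in both the
computational and the diagonal bases is the EPR vector up to a global phase. -/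
theorem stmt9 (θ : Fin 2 × Fin 2 → ℂ)
    (hunit : ∑ p, Complex.normSq (θ p) = 1)
    (hcomp01 : θ (0, 1) = 0) (hcomp10 : θ (1, 0) = 0)
    (hdiagPM : ∑ p : Fin 2 × Fin 2,
      (starRingEnd ℂ) (plusVec p.1 * minusVec p.2) * θ p = 0)
    (hdiagMP : ∑ p : Fin 2 × Fin 2,
      (starRingEnd ℂ) (minusVec p.1 * plusVec p.2) * θ p = 0) :
    ∃ c : ℂ, ‖c‖ = 1 ∧ θ = c • EPR := by
  have hs : (Real.sqrt 2 : ℝ) ≠ 0 := by positivity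
  have hs2 : (Real.sqrt 2 : ℝ) * Real.sqrt 2 = 2 := Real.mul_self_sqrt (by norm_num)
  set a : ℂ := ((1 / Real.sqrt 2 : ℝ) : ℂ) with ha
  have ha0 : a ≠ 0 := by simp [ha, hs]
  simp only [Fintype.sum_prod_type, Fin.sum_univ_two, plusVec, minusVec, ← ha,
    hcomp01, hcomp10, mul_zero, zero_add, add_zero, if_true, if_pos rfl,
    show (1 : Fin 2) ≠ 0 by decide, if_neg, if_false, map_mul, Complex.conj_ofReal,
    map_neg, mul_neg, neg_mul] at hdiagPM
  have key : θ (1, 1) = θ (0, 0) := by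
    have h : a * a * (θ (0, 0) - θ (1, 1)) = 0 := by
      have hca : (starRingEnd ℂ) a = a := by rw [ha, Complex.conj_ofReal]
      rw [hca] at hdiagPM
      linear_combination hdiagPM
    rcases mul_eq_zero.mp h with h' | h'
    · exact absurd h' (mul_ne_zero ha0 ha0)
    · linear_combination -h'
  simp only [Fintype.sum_prod_type, Fin.sum_univ_two, hcomp01, hcomp10,
    Complex.normSq_zero, add_zero, zero_add, key] at hunit
  have habs : Complex.normSq (θ (0,0)) = 1/2 := by linarith
  refine ⟨(Real.sqrt 2 : ℂ) * θ (0, 0), ?_, ?_⟩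
  · rw [norm_mul, Complex.norm_def, Complex.norm_def, habs, Complex.normSq_ofReal,
      ← Real.sqrt_mul (by positivity)]
    rw [show Real.sqrt 2 * Real.sqrt 2 * (1/2) = 1 by rw [hs2]; norm_num, Real.sqrt_one]
  · have hc : ((Real.sqrt 2 : ℝ) : ℂ) * θ (0, 0) * a = θ (0, 0) := by
      rw [ha]
      rw [show ((Real.sqrt 2 : ℝ) : ℂ) * θ (0, 0) * ((1 / Real.sqrt 2 : ℝ) : ℂ)
          = (((Real.sqrt 2 * (1 / Real.sqrt 2) : ℝ)) : ℂ) * θ (0, 0) by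
        push_cast; ring]
      rw [mul_one_div_cancel hs, Complex.ofReal_one, one_mul]
    funext p
    fin_cases p <;>
      simp only [EPR, Pi.smul_apply, smul_eq_mul, ← ha] <;> norm_num
    · exact (hc).symm
    · exact hcomp01
    · exact hcomp10
    · exact key.trans hc.symm
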